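/- Let 0 ≤ t_V ≤ t_D with t_D > 0, and let q_1, …, q_n ∈ [0,1] with q_1 ≤ … ≤ q_n, and let k be the number of indices i with 1 − q_i > t_V / t_D. Then T(q_1, …, q_k) ≤ t_D and T(q_1, …, q_k) ≤ T(q_1, …, q_n); that is, the expected annotation time of the threshold strategy is at most that of the drawing-only strategy D and at most that of the exhaustive verification strategy V^n D. -/

import Mathlib

/-- Expected episode duration: `expDur tV tD [q₁, …, qₘ]` is the expected annotation time of
the strategy `VᵐD` that verifies boxes with rejection probabilities `q₁, …, qₘ` in order
(each verification taking time `tV`) and draws manually (taking time `tD`) if all are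
rejected: `expDur tV tD [] = tD` and `expDur tV tD (q :: qs) = tV + q * expDur tV tD qs`. -/
noncomputable def expDur (tV tD : ℝ) : List ℝ → ℝ
  | [] => tD
  | q :: qs => tV + q * expDur tV tD qs

lemma expDur_le_base (tV x : ℝ) (l : List ℝ)
    (h : ∀ a ∈ l, 0 ≤ a ∧ tV + a * x ≤ x) : expDur tV x l ≤ x := by
  induction l with
  | nil => simp [expDur]
  | cons a l ih =>
    obtain ⟨ha0, ha⟩ := h a List.mem_cons_self
    have := ih fun b hb => h b (List.mem_cons_of_mem a hb)
    calc tV + a * expDur tV x l ≤ tV + a * x := by nlinarith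
      _ ≤ x := ha

lemma expDur_ge_base (tV x : ℝ) (l : List ℝ)
    (h : ∀ a ∈ l, 0 ≤ a ∧ x ≤ tV + a * x) : x ≤ expDur tV x l := by
  induction l with
  | nil => simp [expDur]
  | cons a l ih =>
    obtain ⟨ha0, ha⟩ := h a List.mem_cons_self
    have := ih fun b hb => h b (List.mem_cons_of_mem a hb)
    calc x ≤ tV + a * x := ha
      _ ≤ tV + a * expDur tV x l := by nlinarith

lemma expDur_mono_base (tV x y : ℝ) (hxy : x ≤ y) (l : List ℝ)
    (h : ∀ a ∈ l, 0 ≤ a) : expDur tV x l ≤ expDur tV y l := by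
  induction l with
  | nil => simpa [expDur]
  | cons a l ih =>
    have ha0 := h a List.mem_cons_self
    have := ih fun b hb => h b (List.mem_cons_of_mem a hb)
    simp only [expDur]
    nlinarith

lemma expDur_append (tV tD : ℝ) (l l' : List ℝ) :
    expDur tV tD (l ++ l') = expDur tV (expDur tV tD l') l := by
  induction l with
  | nil => simp [expDur]
  | cons a l ih => simp [expDur, ih]

/-- The threshold strategy (verify the `k` boxes with acceptance probability exceeding
`t_V / t_D`, then draw) is at least as fast as the drawing-only strategy `D` and as the
exhaustive verification strategy `VⁿD`. -/
theorem iadProb_le_standard (tV tD : ℝ) (htV : 0 ≤ tV) (htVD : tV ≤ tD) (htD : 0 < tD)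
    (n : ℕ) (q : ℕ → ℝ)
    (hq : ∀ i < n, 0 ≤ q i ∧ q i ≤ 1)
    (hsorted : ∀ i j, i ≤ j → j < n → q i ≤ q j)
    (k : ℕ) (hk : k = ((Finset.range n).filter fun i => tV / tD < 1 - q i).card) :
    expDur tV tD ((List.range k).map q) ≤ tD ∧
    expDur tV tD ((List.range k).map q) ≤ expDur tV tD ((List.range n).map q) := by
  set P : ℕ → Prop := fun i => tV / tD < 1 - q i with hP
  have hPiff : ∀ i, P i ↔ tV + q i * tD < tD := by
    intro i
    show tV / tD < 1 - q i ↔ _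
    rw [div_lt_iff₀ htD]
    constructor <;> intro h <;> nlinarith
  have hkn : k ≤ n := by
    rw [hk]
    calc _ ≤ (Finset.range n).card := Finset.card_filter_le _ _
      _ = n := Finset.card_range n
  -- indices below k satisfy P
  have hlt : ∀ i < k, P i := by
    intro i hik
    by_contra hnot
    have hsub : (Finset.range n).filter (fun j => tV / tD < 1 - q j) ⊆ Finset.range i := by
      intro j hj
      simp only [Finset.mem_filter, Finset.mem_range] at hj ⊢
      by_contra hji
      push_neg at hji
      exact hnot (lt_of_lt_of_le hj.2 (by linarith [hsorted i j hji hj.1]))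
    have := Finset.card_le_card hsub
    rw [← hk, Finset.card_range] at this
    omega
  -- indices in [k, n) fail P
  have hge : ∀ i, k ≤ i → i < n → ¬ P i := by
    intro i hki hin hPi
    have hsub : Finset.range (i + 1) ⊆
        (Finset.range n).filter (fun j => tV / tD < 1 - q j) := by
      intro j hj
      simp only [Finset.mem_range] at hj
      simp only [Finset.mem_filter, Finset.mem_range]
      refine ⟨by omega, lt_of_lt_of_le hPi (by linarith [hsorted j i (by omega) hin])⟩
    have := Finset.card_le_card hsub
    rw [← hk, Finset.card_range] at this
    omega
  have hmem : ∀ a ∈ (List.range k).map q, 0 ≤ a ∧ tV + a * tD ≤ tD := by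
    intro a ha
    obtain ⟨i, hi, rfl⟩ := List.mem_map.1 ha
    rw [List.mem_range] at hi
    exact ⟨(hq i (by omega)).1, le_of_lt ((hPiff i).1 (hlt i hi))⟩
  refine ⟨expDur_le_base tV tD _ hmem, ?_⟩
  have hsplit : List.range n = List.range k ++ (List.range (n - k)).map (k + ·) := by
    rw [← List.range_add]; congr 1; omega
  rw [hsplit, List.map_append, expDur_append]
  have hrest : tD ≤ expDur tV tD (((List.range (n - k)).map (k + ·)).map q) := by
    apply expDur_ge_base
    intro a ha
    rw [List.map_map, List.mem_map] at ha
    obtain ⟨j, hj, rfl⟩ := ha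
    rw [List.mem_range] at hj
    have h1 : k ≤ k + j := by omega
    have h2 : k + j < n := by omega
    have := hge (k + j) h1 h2
    rw [hPiff] at this
    push_neg at this
    exact ⟨(hq (k + j) h2).1, this⟩
  exact expDur_mono_base tV tD _ hrest _ (fun a ha => (hmem a ha).1)
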